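/- arXiv:1409.4487 — 2 statements merged into one kernel-verified Lean document; each statement's English description precedes it below -/
import Mathlib

section
/- Resonance identity for KP-I: if ξ₁, ξ₂ are nonzero with ξ₁ + ξ₂ ≠ 0, and ω(ξ,η) = ξ³ + η²/ξ, then the system ω(ξ₁,η₁) + ω(ξ₂,η₂) = ω(ξ₁+ξ₂, η₁+η₂) holds if and only if η₁/ξ₁ − η₂/ξ₂ = ±√3 (ξ₁ + ξ₂). -/
/-- resonance identity for KP-I. With the dispersion relation
`ω(ξ,η) = ξ³ + η²/ξ`, for `ξ₁, ξ₂ ≠ 0` with `ξ₁ + ξ₂ ≠ 0`, the resonance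
equation `ω(ξ₁,η₁) + ω(ξ₂,η₂) = ω(ξ₁+ξ₂, η₁+η₂)` holds if and only if
`η₁/ξ₁ − η₂/ξ₂ = ±√3 (ξ₁ + ξ₂)`. -/
theorem kp1_resonance_identity (ξ₁ ξ₂ η₁ η₂ : ℝ)
    (h1 : ξ₁ ≠ 0) (h2 : ξ₂ ≠ 0) (h3 : ξ₁ + ξ₂ ≠ 0) :
    (ξ₁ ^ 3 + η₁ ^ 2 / ξ₁) + (ξ₂ ^ 3 + η₂ ^ 2 / ξ₂)
        = (ξ₁ + ξ₂) ^ 3 + (η₁ + η₂) ^ 2 / (ξ₁ + ξ₂) ↔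
      η₁ / ξ₁ - η₂ / ξ₂ = Real.sqrt 3 * (ξ₁ + ξ₂) ∨
      η₁ / ξ₁ - η₂ / ξ₂ = -(Real.sqrt 3 * (ξ₁ + ξ₂)) := by
  have hs : Real.sqrt 3 ^ 2 = 3 := Real.sq_sqrt (by norm_num)
  rw [show (η₁ / ξ₁ - η₂ / ξ₂ = Real.sqrt 3 * (ξ₁ + ξ₂) ∨
      η₁ / ξ₁ - η₂ / ξ₂ = -(Real.sqrt 3 * (ξ₁ + ξ₂))) ↔
      (η₁ / ξ₁ - η₂ / ξ₂) ^ 2 = (Real.sqrt 3 * (ξ₁ + ξ₂)) ^ 2 from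
      (sq_eq_sq_iff_eq_or_eq_neg).symm]
  rw [mul_pow, hs]
  field_simp
  constructor <;> intro h <;> nlinarith [sq_nonneg (ξ₁+ξ₂), h, sq_nonneg ξ₁, sq_nonneg ξ₂, mul_self_nonneg (η₁*ξ₂ - η₂*ξ₁)]
end

section
/- Anisotropic Gagliardo–Nirenberg inequality: for f : ℝ² → ℝ (Schwartz), ‖f‖_{L^∞} ≲ ‖f‖_{L²}^{1/4} ‖∂_x f‖_{L²}^{1/2} ‖∂_y² f‖_{L²}^{1/4}, with an absolute implicit constant. -/
open MeasureTheory Filter Set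

noncomputable def SchwartzMap.pderivCLM (𝕜 : Type) (m : ℝ × ℝ) :
    SchwartzMap (ℝ × ℝ) ℝ →L[ℝ] SchwartzMap (ℝ × ℝ) ℝ :=
  SchwartzMap.evalCLM ℝ (ℝ × ℝ) ℝ m ∘L SchwartzMap.fderivCLM ℝ (ℝ × ℝ) ℝ

theorem SchwartzMap.pderivCLM_apply (𝕜 : Type) (m : ℝ × ℝ) (f : SchwartzMap (ℝ × ℝ) ℝ)
    (x : ℝ × ℝ) : SchwartzMap.pderivCLM 𝕜 m f x = fderiv ℝ f x m := rfl

namespace AGN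

noncomputable section

local notation "S2" => SchwartzMap (ℝ × ℝ) ℝ

lemma htg (g : S2) : Function.HasTemperateGrowth (⇑g) := by
  refine ⟨g.smooth', fun n => ?_⟩
  obtain ⟨C, -, hC⟩ := g.decay 0 n
  exact ⟨0, C, fun x => by simpa using hC x⟩

def mulS (g h : S2) : S2 :=
  SchwartzMap.bilinLeftCLM (ContinuousLinearMap.mul ℝ ℝ) (htg h) g

@[simp] lemma mulS_apply (g h : S2) (z : ℝ × ℝ) : mulS g h z = g z * h z := rfl

lemma bound_aux (g : S2) : ∃ C : ℝ, 0 < C ∧ ∀ z : ℝ × ℝ,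
    |g z| ≤ C * (1 + z.1 ^ 2)⁻¹ ∧ |g z| ≤ C * (1 + z.2 ^ 2)⁻¹ := by
  obtain ⟨C₀, hC₀pos, hC₀⟩ := g.decay 0 0
  obtain ⟨C₂, hC₂pos, hC₂⟩ := g.decay 2 0
  refine ⟨C₀ + C₂, by positivity, fun z => ?_⟩
  have h0 : |g z| ≤ C₀ := by simpa using hC₀ z
  have h2 : ‖z‖ ^ 2 * |g z| ≤ C₂ := by simpa using hC₂ z
  have key : ∀ a : ℝ, a ^ 2 ≤ ‖z‖ ^ 2 → |g z| ≤ (C₀ + C₂) * (1 + a ^ 2)⁻¹ := by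
    intro a ha
    rw [← div_eq_mul_inv, le_div_iff₀ (by positivity)]
    have : a ^ 2 * |g z| ≤ ‖z‖ ^ 2 * |g z| :=
      mul_le_mul_of_nonneg_right ha (abs_nonneg _)
    nlinarith [abs_nonneg (g z)]
  constructor
  · refine key z.1 ?_
    have h1 : |z.1| ≤ ‖z‖ := by
      simpa using norm_fst_le z
    calc z.1 ^ 2 = |z.1| ^ 2 := (sq_abs _).symm
    _ ≤ ‖z‖ ^ 2 := by gcongr
  · refine key z.2 ?_
    have h1 : |z.2| ≤ ‖z‖ := by
      simpa using norm_snd_le z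
    calc z.2 ^ 2 = |z.2| ^ 2 := (sq_abs _).symm
    _ ≤ ‖z‖ ^ 2 := by gcongr

lemma integrable_snd (g : S2) (x : ℝ) : Integrable (fun t => g (x, t)) := by
  obtain ⟨C, hCpos, hC⟩ := bound_aux g
  refine Integrable.mono ((integrable_inv_one_add_sq).const_mul C)
    ((g.continuous.comp (continuous_const.prodMk continuous_id)).aestronglyMeasurable) ?_
  refine .of_forall fun t => ?_
  have := (hC (x, t)).2
  simp only [Real.norm_eq_abs]
  rw [abs_of_nonneg (by positivity : (0:ℝ) ≤ C * (1 + t ^ 2)⁻¹)]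
  simpa using this

lemma integrable_fst (g : S2) (t : ℝ) : Integrable (fun s => g (s, t)) := by
  obtain ⟨C, hCpos, hC⟩ := bound_aux g
  refine Integrable.mono ((integrable_inv_one_add_sq).const_mul C)
    ((g.continuous.comp (continuous_id.prodMk continuous_const)).aestronglyMeasurable) ?_
  refine .of_forall fun s => ?_
  have := (hC (s, t)).1
  simp only [Real.norm_eq_abs]
  rw [abs_of_nonneg (by positivity : (0:ℝ) ≤ C * (1 + s ^ 2)⁻¹)]
  simpa using this

lemma tendsto_aux (C : ℝ) :
    Tendsto (fun s : ℝ => C * (1 + s ^ 2)⁻¹) atBot (nhds 0)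
    ∧ Tendsto (fun s : ℝ => C * (1 + s ^ 2)⁻¹) atTop (nhds 0) := by
  have hsqbot : Tendsto (fun s : ℝ => 1 + s ^ 2) atBot atTop := by
    refine tendsto_atTop_add_const_left _ 1 ?_
    have : Tendsto (fun s : ℝ => s * s) atBot atTop :=
      Filter.Tendsto.atBot_mul_atBot₀ tendsto_id tendsto_id
    simpa [← sq] using this
  have hsqtop : Tendsto (fun s : ℝ => 1 + s ^ 2) atTop atTop := by
    refine tendsto_atTop_add_const_left _ 1 ?_
    exact tendsto_pow_atTop two_ne_zero
  constructor
  · simpa using (hsqbot.inv_tendsto_atTop).const_mul C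
  · simpa using (hsqtop.inv_tendsto_atTop).const_mul C

lemma tendsto_fst_bot (g : S2) (t : ℝ) : Tendsto (fun s => g (s, t)) atBot (nhds 0) := by
  obtain ⟨C, hCpos, hC⟩ := bound_aux g
  refine squeeze_zero_norm (fun s => ?_) (tendsto_aux C).1
  simpa using (hC (s, t)).1

lemma tendsto_snd_bot (g : S2) (x : ℝ) : Tendsto (fun t => g (x, t)) atBot (nhds 0) := by
  obtain ⟨C, hCpos, hC⟩ := bound_aux g
  refine squeeze_zero_norm (fun t => ?_) (tendsto_aux C).1
  simpa using (hC (x, t)).2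

lemma tendsto_snd_top (g : S2) (x : ℝ) : Tendsto (fun t => g (x, t)) atTop (nhds 0) := by
  obtain ⟨C, hCpos, hC⟩ := bound_aux g
  refine squeeze_zero_norm (fun t => ?_) (tendsto_aux C).2
  simpa using (hC (x, t)).2

lemma hasDerivAt_fst (g : S2) (x y : ℝ) :
    HasDerivAt (fun s => g (s, y)) (SchwartzMap.pderivCLM ℝ ((1:ℝ), (0:ℝ)) g (x, y)) x := by
  have hg : HasFDerivAt g (fderiv ℝ g (x, y)) (x, y) := (g.differentiable (x, y)).hasFDerivAt
  have hc : HasDerivAt (fun s : ℝ => (s, y)) ((1:ℝ), (0:ℝ)) x :=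
    (hasDerivAt_id x).prodMk (hasDerivAt_const x y)
  simpa [SchwartzMap.pderivCLM_apply, Function.comp_def] using hg.comp_hasDerivAt x hc

lemma hasDerivAt_snd (g : S2) (x y : ℝ) :
    HasDerivAt (fun t => g (x, t)) (SchwartzMap.pderivCLM ℝ ((0:ℝ), (1:ℝ)) g (x, y)) y := by
  have hg : HasFDerivAt g (fderiv ℝ g (x, y)) (x, y) := (g.differentiable (x, y)).hasFDerivAt
  have hc : HasDerivAt (fun t : ℝ => (x, t)) ((0:ℝ), (1:ℝ)) y :=
    (hasDerivAt_const y x).prodMk (hasDerivAt_id y)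
  simpa [SchwartzMap.pderivCLM_apply, Function.comp_def] using hg.comp_hasDerivAt y hc

lemma fderiv_apply_fixed (g : S2) (v w z : ℝ × ℝ) :
    fderiv ℝ (fun u => fderiv ℝ g u v) z w = fderiv ℝ (fderiv ℝ g) z w v := by
  have hcd : ContDiff ℝ 1 (fderiv ℝ (⇑g)) :=
    g.smooth'.fderiv_right (by exact WithTop.coe_le_coe.2 le_top)
  have h : HasFDerivAt (fderiv ℝ (⇑g)) (fderiv ℝ (fderiv ℝ (⇑g)) z) z :=
    (hcd.differentiable one_ne_zero z).hasFDerivAt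
  have h2 := (h.clm_apply (hasFDerivAt_const v z)).fderiv
  rw [h2]
  simp

lemma pderiv_comm (g : S2) (z : ℝ × ℝ) :
    SchwartzMap.pderivCLM ℝ ((0:ℝ), (1:ℝ)) (SchwartzMap.pderivCLM ℝ ((1:ℝ), (0:ℝ)) g) z
      = SchwartzMap.pderivCLM ℝ ((1:ℝ), (0:ℝ)) (SchwartzMap.pderivCLM ℝ ((0:ℝ), (1:ℝ)) g) z := by
  have e1 : ⇑(SchwartzMap.pderivCLM ℝ ((1:ℝ), (0:ℝ)) g) = fun u => fderiv ℝ g u ((1:ℝ), (0:ℝ)) :=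
    funext fun u => SchwartzMap.pderivCLM_apply ℝ _ g u
  have e2 : ⇑(SchwartzMap.pderivCLM ℝ ((0:ℝ), (1:ℝ)) g) = fun u => fderiv ℝ g u ((0:ℝ), (1:ℝ)) :=
    funext fun u => SchwartzMap.pderivCLM_apply ℝ _ g u
  rw [SchwartzMap.pderivCLM_apply, SchwartzMap.pderivCLM_apply, e1, e2,
    fderiv_apply_fixed, fderiv_apply_fixed]
  have hf : ∀ u, HasFDerivAt (⇑g) (fderiv ℝ (⇑g) u) u :=
    fun u => (g.differentiable u).hasFDerivAt
  have hcd : ContDiff ℝ 1 (fderiv ℝ (⇑g)) :=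
    g.smooth'.fderiv_right (by exact WithTop.coe_le_coe.2 le_top)
  have h : HasFDerivAt (fderiv ℝ (⇑g)) (fderiv ℝ (fderiv ℝ (⇑g)) z) z :=
    (hcd.differentiable one_ne_zero z).hasFDerivAt
  exact second_derivative_symmetric hf h _ _

lemma sq_FTC_fst (g : S2) (t x : ℝ) :
    g (x, t) ^ 2
      = ∫ s in Iic x, 2 * g (s, t) * SchwartzMap.pderivCLM ℝ ((1:ℝ), (0:ℝ)) g (s, t) := by
  have hint : Integrable (fun s => 2 * g (s, t) * SchwartzMap.pderivCLM ℝ ((1:ℝ), (0:ℝ)) g (s, t)) := by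
    have := (integrable_fst (mulS g (SchwartzMap.pderivCLM ℝ ((1:ℝ), (0:ℝ)) g)) t).const_mul 2
    simpa [mul_assoc] using this
  have htd : Tendsto (fun s => g (s, t) ^ 2) atBot (nhds 0) := by
    simpa using (tendsto_fst_bot g t).pow 2
  have h := integral_Iic_of_hasDerivAt_of_tendsto' (a := x)
    (f := fun s => g (s, t) ^ 2)
    (f' := fun s => 2 * g (s, t) * SchwartzMap.pderivCLM ℝ ((1:ℝ), (0:ℝ)) g (s, t))
    (fun s _ => by simpa [pow_one, Pi.pow_def] using (hasDerivAt_fst g s t).pow 2)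
    hint.integrableOn htd
  rw [h, sub_zero]

lemma sq_FTC_snd (g : S2) (x y : ℝ) :
    g (x, y) ^ 2
      = ∫ t in Iic y, 2 * g (x, t) * SchwartzMap.pderivCLM ℝ ((0:ℝ), (1:ℝ)) g (x, t) := by
  have hint : Integrable (fun t => 2 * g (x, t) * SchwartzMap.pderivCLM ℝ ((0:ℝ), (1:ℝ)) g (x, t)) := by
    have := (integrable_snd (mulS g (SchwartzMap.pderivCLM ℝ ((0:ℝ), (1:ℝ)) g)) x).const_mul 2
    simpa [mul_assoc] using this
  have htd : Tendsto (fun t => g (x, t) ^ 2) atBot (nhds 0) := by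
    simpa using (tendsto_snd_bot g x).pow 2
  have h := integral_Iic_of_hasDerivAt_of_tendsto' (a := y)
    (f := fun t => g (x, t) ^ 2)
    (f' := fun t => 2 * g (x, t) * SchwartzMap.pderivCLM ℝ ((0:ℝ), (1:ℝ)) g (x, t))
    (fun t _ => by simpa [pow_one, Pi.pow_def] using (hasDerivAt_snd g x t).pow 2)
    hint.integrableOn htd
  rw [h, sub_zero]

lemma ibp (u v u' v' : ℝ → ℝ)
    (hu : ∀ t, HasDerivAt u (u' t) t) (hv : ∀ t, HasDerivAt v (v' t) t)
    (h1 : Integrable (fun t => u t * v' t)) (h2 : Integrable (fun t => u' t * v t))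
    (hbot : Tendsto (fun t => u t * v t) atBot (nhds 0))
    (htop : Tendsto (fun t => u t * v t) atTop (nhds 0)) :
    ∫ t, u t * v' t = - ∫ t, u' t * v t := by
  have hw : ∀ t, HasDerivAt (fun t => u t * v t) (u' t * v t + u t * v' t) t :=
    fun t => (hu t).mul (hv t)
  have hwint : Integrable (fun t => u' t * v t + u t * v' t) := h2.add h1
  have hIic := integral_Iic_of_hasDerivAt_of_tendsto' (a := 0)
    (fun t _ => hw t) hwint.integrableOn hbot
  have hIoi := integral_Ioi_of_hasDerivAt_of_tendsto' (a := 0)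
    (fun t _ => hw t) hwint.integrableOn htop
  have htot : ∫ t, (u' t * v t + u t * v' t) = 0 := by
    rw [← intervalIntegral.integral_Iic_add_Ioi hwint.integrableOn hwint.integrableOn, hIic, hIoi]
    ring
  rw [integral_add h2 h1] at htot
  linarith

lemma cauchy_schwarz {α : Type*} [MeasureSpace α] (u v : α → ℝ)
    (hmu : AEStronglyMeasurable u volume) (hmv : AEStronglyMeasurable v volume)
    (hu2 : Integrable (fun a => u a ^ 2)) (hv2 : Integrable (fun a => v a ^ 2)) :
    ∫ a, |u a * v a| ≤ Real.sqrt (∫ a, u a ^ 2) * Real.sqrt (∫ a, v a ^ 2) := by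
  have hpq : Real.HolderConjugate 2 2 := Real.HolderConjugate.two_two
  have hu : MemLp u (ENNReal.ofReal 2) volume := by
    rw [ENNReal.ofReal_ofNat]
    exact (memLp_two_iff_integrable_sq hmu).2 hu2
  have hv : MemLp v (ENNReal.ofReal 2) volume := by
    rw [ENNReal.ofReal_ofNat]
    exact (memLp_two_iff_integrable_sq hmv).2 hv2
  have h := integral_mul_norm_le_Lp_mul_Lq (μ := volume) hpq hu hv
  calc ∫ a, |u a * v a| = ∫ a, ‖u a‖ * ‖v a‖ := by
        simp [abs_mul, Real.norm_eq_abs]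
  _ ≤ (∫ a, ‖u a‖ ^ (2:ℝ)) ^ ((1:ℝ)/2) * (∫ a, ‖v a‖ ^ (2:ℝ)) ^ ((1:ℝ)/2) := by
        simpa using h
  _ = Real.sqrt (∫ a, u a ^ 2) * Real.sqrt (∫ a, v a ^ 2) := by
        rw [Real.sqrt_eq_rpow, Real.sqrt_eq_rpow]
        congr 2 <;> refine integral_congr_ae (.of_forall fun a => ?_) <;>
          simp [Real.rpow_two, Real.norm_eq_abs, sq_abs]

lemma line_sq_bound_fst (g : S2) (x t : ℝ) :
    g (x, t) ^ 2 ≤ 2 * ∫ s, |g (s, t) * SchwartzMap.pderivCLM ℝ ((1:ℝ), (0:ℝ)) g (s, t)| := by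
  set gx := SchwartzMap.pderivCLM ℝ ((1:ℝ), (0:ℝ)) g with hgx
  have hint2 : Integrable (fun s => 2 * g (s, t) * gx (s, t)) := by
    simpa [mul_assoc] using (integrable_fst (mulS g gx) t).const_mul 2
  rw [sq_FTC_fst g t x]
  calc ∫ s in Iic x, 2 * g (s, t) * gx (s, t)
      ≤ |∫ s in Iic x, 2 * g (s, t) * gx (s, t)| := le_abs_self _
    _ ≤ ∫ s in Iic x, |2 * g (s, t) * gx (s, t)| := by
        simpa only [Real.norm_eq_abs] using norm_integral_le_integral_norm
          (μ := volume.restrict (Iic x)) (f := fun s => 2 * g (s, t) * gx (s, t))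
    _ ≤ ∫ s, |2 * g (s, t) * gx (s, t)| :=
        setIntegral_le_integral hint2.abs (.of_forall fun s => abs_nonneg _)
    _ = 2 * ∫ s, |g (s, t) * gx (s, t)| := by
        rw [← integral_const_mul]
        congr 1; funext s; rw [mul_assoc, abs_mul, abs_two]

lemma step_i (g : S2) (x : ℝ) :
    (∫ t, g (x, t) ^ 2)
      ≤ 2 * ∫ z : ℝ × ℝ, |g z * SchwartzMap.pderivCLM ℝ ((1:ℝ), (0:ℝ)) g z| := by
  set gx := SchwartzMap.pderivCLM ℝ ((1:ℝ), (0:ℝ)) g with hgx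
  set m := mulS g gx with hm
  have hprod : Integrable (⇑m) (volume.prod volume) := m.integrable
  have hswap : Integrable (⇑m ∘ Prod.swap) (volume.prod volume) := hprod.swap
  have hH : Integrable (fun t => ∫ s, ‖m (s, t)‖) := by
    have := hswap.integral_norm_prod_left
    simpa [Function.comp_def] using this
  have hLHS : Integrable (fun t => g (x, t) ^ 2) := by
    simpa [pow_two] using integrable_snd (mulS g g) x
  calc (∫ t, g (x, t) ^ 2) ≤ ∫ t, 2 * ∫ s, ‖m (s, t)‖ := by
        refine integral_mono hLHS (hH.const_mul 2) (fun t => ?_)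
        simpa [Real.norm_eq_abs, hm] using line_sq_bound_fst g x t
    _ = 2 * ∫ t, ∫ s, ‖m (s, t)‖ := integral_const_mul _ _
    _ = 2 * ∫ z : ℝ × ℝ, ‖m (z.2, z.1)‖ := by
        rw [integral_integral (f := fun t s => ‖m (s, t)‖) hswap.norm]
        rfl
    _ = 2 * ∫ z : ℝ × ℝ, ‖m z‖ :=
        congrArg (fun r => 2 * r)
          (integral_prod_swap (μ := (volume : Measure ℝ)) (ν := (volume : Measure ℝ))
            (fun z : ℝ × ℝ => ‖m z‖))
    _ = 2 * ∫ z : ℝ × ℝ, |g z * gx z| := rfl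

lemma step_ii (f : S2) (x : ℝ) :
    (∫ t, SchwartzMap.pderivCLM ℝ ((0:ℝ), (1:ℝ)) f (x, t) ^ 2)
      ≤ 2 * ∫ z : ℝ × ℝ, |SchwartzMap.pderivCLM ℝ ((1:ℝ), (0:ℝ)) f z *
          SchwartzMap.pderivCLM ℝ ((0:ℝ), (1:ℝ)) (SchwartzMap.pderivCLM ℝ ((0:ℝ), (1:ℝ)) f) z| := by
  set fx := SchwartzMap.pderivCLM ℝ ((1:ℝ), (0:ℝ)) f with hfx
  set fy := SchwartzMap.pderivCLM ℝ ((0:ℝ), (1:ℝ)) f with hfy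
  set fxy := SchwartzMap.pderivCLM ℝ ((1:ℝ), (0:ℝ)) fy with hfxy
  set fyy := SchwartzMap.pderivCLM ℝ ((0:ℝ), (1:ℝ)) fy with hfyy
  have hm : Integrable (fun z : ℝ × ℝ => 2 * fy z * fxy z) volume := by
    simpa [mul_assoc] using (mulS fy fxy).integrable.const_mul 2
  have hmprod : Integrable (fun z : ℝ × ℝ => 2 * fy z * fxy z) (volume.prod volume) := hm
  have hswap : Integrable ((fun z : ℝ × ℝ => 2 * fy z * fxy z) ∘ Prod.swap)
      (volume.prod volume) := hmprod.swap
  have hrestrict : Integrable ((fun z : ℝ × ℝ => 2 * fy z * fxy z) ∘ Prod.swap)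
      (volume.prod (volume.restrict (Iic x))) := by
    have he := Measure.prod_restrict (μ := (volume : Measure ℝ)) (ν := (volume : Measure ℝ))
      univ (Iic x)
    rw [Measure.restrict_univ] at he
    rw [he]
    exact hswap.restrict
  have hswapped : (∫ t, ∫ s in Iic x, 2 * fy (s, t) * fxy (s, t))
      = ∫ s in Iic x, ∫ t, 2 * fy (s, t) * fxy (s, t) := by
    apply integral_integral_swap (f := fun t s => 2 * fy (s, t) * fxy (s, t))
    exact hrestrict
  have inner_eq : ∀ s, (∫ t, 2 * fy (s, t) * fxy (s, t))
      = -2 * ∫ t, fyy (s, t) * fx (s, t) := by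
    intro s
    have h1 : (∫ t, fy (s, t) * fxy (s, t)) = - ∫ t, fyy (s, t) * fx (s, t) := by
      refine ibp (fun t => fy (s, t)) (fun t => fx (s, t))
        (fun t => fyy (s, t)) (fun t => fxy (s, t))
        (fun t => hasDerivAt_snd fy s t) (fun t => ?_) ?_ ?_ ?_ ?_
      · have h := hasDerivAt_snd fx s t
        rwa [hfx, pderiv_comm f (s, t), ← hfy, ← hfxy] at h
      · simpa using integrable_snd (mulS fy fxy) s
      · simpa using integrable_snd (mulS fyy fx) s
      · simpa using tendsto_snd_bot (mulS fy fx) s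
      · simpa using tendsto_snd_top (mulS fy fx) s
    calc ∫ t, 2 * fy (s, t) * fxy (s, t) = 2 * ∫ t, fy (s, t) * fxy (s, t) := by
          rw [← integral_const_mul]; congr 1; funext t; ring
      _ = -2 * ∫ t, fyy (s, t) * fx (s, t) := by rw [h1]; ring
  set q := mulS fx fyy with hq'
  have hq : Integrable (⇑q) (volume.prod volume) := q.integrable
  have hHint : Integrable (fun s => ∫ t, ‖q (s, t)‖) := by
    simpa using hq.integral_norm_prod_left
  have habs : ∀ s, (∫ t, 2 * fy (s, t) * fxy (s, t)) ≤ 2 * ∫ t, ‖q (s, t)‖ := by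
    intro s
    rw [inner_eq s]
    have h3 : |∫ t, fyy (s, t) * fx (s, t)| ≤ ∫ t, |fyy (s, t) * fx (s, t)| := by
      simpa only [Real.norm_eq_abs] using norm_integral_le_integral_norm
        (μ := (volume : Measure ℝ)) (f := fun t => fyy (s, t) * fx (s, t))
    have h4 : (∫ t, |fyy (s, t) * fx (s, t)|) = ∫ t, ‖q (s, t)‖ := by
      refine integral_congr_ae (.of_forall fun t => ?_)
      rw [hq']
      simp only [mulS_apply, Real.norm_eq_abs, abs_mul]
      exact mul_comm _ _
    have h5 : - (∫ t, fyy (s, t) * fx (s, t)) ≤ ∫ t, ‖q (s, t)‖ := by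
      rw [← h4]; exact (neg_le_abs _).trans h3
    nlinarith [h5]
  have hfyint : Integrable (fun t => fy (x, t) ^ 2) := by
    simpa [pow_two] using integrable_snd (mulS fy fy) x
  calc (∫ t, fy (x, t) ^ 2) = ∫ t, ∫ s in Iic x, 2 * fy (s, t) * fxy (s, t) := by
        refine integral_congr_ae (.of_forall fun t => ?_)
        exact sq_FTC_fst fy t x
    _ = ∫ s in Iic x, ∫ t, 2 * fy (s, t) * fxy (s, t) := hswapped
    _ ≤ ∫ s in Iic x, 2 * ∫ t, ‖q (s, t)‖ := by
        refine setIntegral_mono_on ?_ ?_ measurableSet_Iic (fun s _ => habs s)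
        · exact (hmprod.integral_prod_left).integrableOn
        · exact ((hHint.const_mul 2)).integrableOn
    _ ≤ ∫ s, 2 * ∫ t, ‖q (s, t)‖ := by
        refine setIntegral_le_integral (hHint.const_mul 2) (.of_forall fun s => ?_)
        have : 0 ≤ ∫ t, ‖q (s, t)‖ := integral_nonneg fun t => norm_nonneg _
        positivity
    _ = 2 * ∫ s, ∫ t, ‖q (s, t)‖ := integral_const_mul _ _
    _ = 2 * ∫ z : ℝ × ℝ, ‖q z‖ := by
        rw [integral_integral (f := fun s t => ‖q (s, t)‖) hq.norm]
        rfl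
    _ = 2 * ∫ z : ℝ × ℝ, |fx z * fyy z| := rfl

lemma pointwise_bound (f : S2) (x y : ℝ) :
    f (x, y) ^ 2 ≤ 2 * Real.sqrt (∫ t, f (x, t) ^ 2) *
      Real.sqrt (∫ t, SchwartzMap.pderivCLM ℝ ((0:ℝ), (1:ℝ)) f (x, t) ^ 2) := by
  set fy := SchwartzMap.pderivCLM ℝ ((0:ℝ), (1:ℝ)) f with hfy
  have hint2 : Integrable (fun t => 2 * f (x, t) * fy (x, t)) := by
    simpa [mul_assoc] using (integrable_snd (mulS f fy) x).const_mul 2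
  have hCS : (∫ t, |f (x, t) * fy (x, t)|)
      ≤ Real.sqrt (∫ t, f (x, t) ^ 2) * Real.sqrt (∫ t, fy (x, t) ^ 2) := by
    refine cauchy_schwarz _ _ ?_ ?_ ?_ ?_
    · exact (f.continuous.comp (continuous_const.prodMk continuous_id)).aestronglyMeasurable
    · exact (fy.continuous.comp (continuous_const.prodMk continuous_id)).aestronglyMeasurable
    · simpa [pow_two] using integrable_snd (mulS f f) x
    · simpa [pow_two] using integrable_snd (mulS fy fy) x
  rw [sq_FTC_snd f x y]
  calc ∫ t in Iic y, 2 * f (x, t) * fy (x, t)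
      ≤ |∫ t in Iic y, 2 * f (x, t) * fy (x, t)| := le_abs_self _
    _ ≤ ∫ t in Iic y, |2 * f (x, t) * fy (x, t)| := by
        simpa only [Real.norm_eq_abs] using norm_integral_le_integral_norm
          (μ := volume.restrict (Iic y)) (f := fun t => 2 * f (x, t) * fy (x, t))
    _ ≤ ∫ t, |2 * f (x, t) * fy (x, t)| :=
        setIntegral_le_integral hint2.abs (.of_forall fun t => abs_nonneg _)
    _ = 2 * ∫ t, |f (x, t) * fy (x, t)| := by
        rw [← integral_const_mul]
        congr 1; funext t; rw [mul_assoc, abs_mul, abs_two]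
    _ ≤ 2 * (Real.sqrt (∫ t, f (x, t) ^ 2) * Real.sqrt (∫ t, fy (x, t) ^ 2)) := by
        linarith [hCS]
    _ = 2 * Real.sqrt (∫ t, f (x, t) ^ 2) * Real.sqrt (∫ t, fy (x, t) ^ 2) := by ring

end

end AGN


/-- anisotropic Gagliardo–Nirenberg inequality: for Schwartz
`f : ℝ² → ℝ`, `‖f‖_∞ ≲ ‖f‖₂^{1/4} ‖∂ₓf‖₂^{1/2} ‖∂_y²f‖₂^{1/4}` with an absolute
constant (here L² norms are written as `(∫ |·|²)^{1/2}`). -/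
theorem anisotropic_gagliardo_nirenberg :
    ∃ C : ℝ, 0 < C ∧ ∀ f : SchwartzMap (ℝ × ℝ) ℝ, ∀ p : ℝ × ℝ,
      |f p| ≤ C * (∫ q : ℝ × ℝ, (f q) ^ 2) ^ ((1:ℝ) / 8)
        * (∫ q : ℝ × ℝ, (deriv (fun s => f (s, q.2)) q.1) ^ 2) ^ ((1:ℝ) / 4)
        * (∫ q : ℝ × ℝ,
            (deriv (fun s => deriv (fun r => f (q.1, r)) s) q.2) ^ 2) ^ ((1:ℝ) / 8) := by
  refine ⟨2, by norm_num, fun f p => ?_⟩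
  set fx := SchwartzMap.pderivCLM ℝ ((1:ℝ), (0:ℝ)) f with hfx
  set fy := SchwartzMap.pderivCLM ℝ ((0:ℝ), (1:ℝ)) f with hfy
  set fyy := SchwartzMap.pderivCLM ℝ ((0:ℝ), (1:ℝ)) fy with hfyy
  have hXrw : (∫ q : ℝ × ℝ, (deriv (fun s => f (s, q.2)) q.1) ^ 2)
      = ∫ q : ℝ × ℝ, fx q ^ 2 := by
    refine integral_congr_ae (.of_forall fun q => ?_)
    show deriv (fun s => f (s, q.2)) q.1 ^ 2 = fx q ^ 2
    rw [(AGN.hasDerivAt_fst f q.1 q.2).deriv, ← hfx, Prod.mk.eta]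
  have hYrw : (∫ q : ℝ × ℝ, (deriv (fun s => deriv (fun r => f (q.1, r)) s) q.2) ^ 2)
      = ∫ q : ℝ × ℝ, fyy q ^ 2 := by
    refine integral_congr_ae (.of_forall fun q => ?_)
    have hinner : (fun s => deriv (fun r => f (q.1, r)) s) = fun s => fy (q.1, s) := by
      funext s
      rw [(AGN.hasDerivAt_snd f q.1 s).deriv, ← hfy]
    show deriv (fun s => deriv (fun r => f (q.1, r)) s) q.2 ^ 2 = fyy q ^ 2
    rw [hinner, (AGN.hasDerivAt_snd fy q.1 q.2).deriv, ← hfyy, Prod.mk.eta]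
  rw [hXrw, hYrw]
  set N := ∫ q : ℝ × ℝ, f q ^ 2 with hN'
  set X := ∫ q : ℝ × ℝ, fx q ^ 2 with hX'
  set Y := ∫ q : ℝ × ℝ, fyy q ^ 2 with hY'
  have hN : 0 ≤ N := integral_nonneg fun q => sq_nonneg _
  have hX : 0 ≤ X := integral_nonneg fun q => sq_nonneg _
  have hY : 0 ≤ Y := integral_nonneg fun q => sq_nonneg _
  have hsqf : Integrable (fun z : ℝ × ℝ => f z ^ 2) :=
    ((AGN.mulS f f).integrable).congr (Filter.Eventually.of_forall fun z => by
      simp [pow_two])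
  have hsqfx : Integrable (fun z : ℝ × ℝ => fx z ^ 2) :=
    ((AGN.mulS fx fx).integrable).congr (Filter.Eventually.of_forall fun z => by
      simp [pow_two])
  have hsqfyy : Integrable (fun z : ℝ × ℝ => fyy z ^ 2) :=
    ((AGN.mulS fyy fyy).integrable).congr (Filter.Eventually.of_forall fun z => by
      simp [pow_two])
  have hcs1 : (∫ z : ℝ × ℝ, |f z * fx z|) ≤ Real.sqrt N * Real.sqrt X :=
    AGN.cauchy_schwarz _ _ f.continuous.aestronglyMeasurable
      fx.continuous.aestronglyMeasurable hsqf hsqfx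
  have hcs2 : (∫ z : ℝ × ℝ, |fx z * fyy z|) ≤ Real.sqrt X * Real.sqrt Y :=
    AGN.cauchy_schwarz _ _ fx.continuous.aestronglyMeasurable
      fyy.continuous.aestronglyMeasurable hsqfx hsqfyy
  have ha : (∫ t, f (p.1, t) ^ 2) ≤ 2 * (Real.sqrt N * Real.sqrt X) := by
    have h := AGN.step_i f p.1
    rw [← hfx] at h
    linarith
  have hd : (∫ t, fy (p.1, t) ^ 2) ≤ 2 * (Real.sqrt X * Real.sqrt Y) := by
    have h := AGN.step_ii f p.1
    rw [← hfy, ← hfx] at h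
    rw [show SchwartzMap.pderivCLM ℝ ((0:ℝ), (1:ℝ)) fy = fyy from hfyy.symm] at h
    linarith
  have hpt : f p ^ 2 ≤ 2 * Real.sqrt (2 * (Real.sqrt N * Real.sqrt X)) *
      Real.sqrt (2 * (Real.sqrt X * Real.sqrt Y)) := by
    have h0 := AGN.pointwise_bound f p.1 p.2
    rw [← hfy, Prod.mk.eta] at h0
    have s1 : Real.sqrt (∫ t, f (p.1, t) ^ 2)
        ≤ Real.sqrt (2 * (Real.sqrt N * Real.sqrt X)) := Real.sqrt_le_sqrt ha
    have s2 : Real.sqrt (∫ t, fy (p.1, t) ^ 2)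
        ≤ Real.sqrt (2 * (Real.sqrt X * Real.sqrt Y)) := Real.sqrt_le_sqrt hd
    have n1 : (0:ℝ) ≤ Real.sqrt (∫ t, f (p.1, t) ^ 2) := Real.sqrt_nonneg _
    have n2 : (0:ℝ) ≤ Real.sqrt (∫ t, fy (p.1, t) ^ 2) := Real.sqrt_nonneg _
    have n3 : (0:ℝ) ≤ Real.sqrt (2 * (Real.sqrt N * Real.sqrt X)) := Real.sqrt_nonneg _
    nlinarith [h0, s1, s2, n1, n2, n3]
  set n := N ^ ((1:ℝ)/8) with hn'
  set xx := X ^ ((1:ℝ)/8) with hxx'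
  set yy := Y ^ ((1:ℝ)/8) with hyy'
  have hnn : 0 ≤ n := Real.rpow_nonneg hN _
  have hxxn : 0 ≤ xx := Real.rpow_nonneg hX _
  have hyyn : 0 ≤ yy := Real.rpow_nonneg hY _
  have hs1 : Real.sqrt N = n ^ 4 := by
    rw [hn', ← Real.rpow_natCast (N ^ ((1:ℝ)/8)) 4, ← Real.rpow_mul hN, Real.sqrt_eq_rpow]
    norm_num
  have hs2 : Real.sqrt X = xx ^ 4 := by
    rw [hxx', ← Real.rpow_natCast (X ^ ((1:ℝ)/8)) 4, ← Real.rpow_mul hX, Real.sqrt_eq_rpow]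
    norm_num
  have hs3 : Real.sqrt Y = yy ^ 4 := by
    rw [hyy', ← Real.rpow_natCast (Y ^ ((1:ℝ)/8)) 4, ← Real.rpow_mul hY, Real.sqrt_eq_rpow]
    norm_num
  have e1 : Real.sqrt (2 * (Real.sqrt N * Real.sqrt X)) = Real.sqrt 2 * (n ^ 2 * xx ^ 2) := by
    rw [hs1, hs2, Real.sqrt_mul (by norm_num : (0:ℝ) ≤ 2),
      show n ^ 4 * xx ^ 4 = (n ^ 2 * xx ^ 2) ^ 2 by ring, Real.sqrt_sq (by positivity)]
  have e2 : Real.sqrt (2 * (Real.sqrt X * Real.sqrt Y)) = Real.sqrt 2 * (xx ^ 2 * yy ^ 2) := by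
    rw [hs2, hs3, Real.sqrt_mul (by norm_num : (0:ℝ) ≤ 2),
      show xx ^ 4 * yy ^ 4 = (xx ^ 2 * yy ^ 2) ^ 2 by ring, Real.sqrt_sq (by positivity)]
  have key : f p ^ 2 ≤ (2 * n * xx ^ 2 * yy) ^ 2 := by
    have h2 : Real.sqrt 2 * Real.sqrt 2 = 2 := Real.mul_self_sqrt (by norm_num)
    have he : 2 * (Real.sqrt 2 * (n ^ 2 * xx ^ 2)) * (Real.sqrt 2 * (xx ^ 2 * yy ^ 2))
        = (2 * n * xx ^ 2 * yy) ^ 2 := by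
      linear_combination (2 * n ^ 2 * xx ^ 2 * xx ^ 2 * yy ^ 2) * h2
    rw [e1, e2, he] at hpt
    exact hpt
  have habs : |f p| ≤ 2 * n * xx ^ 2 * yy := by
    have h := Real.sqrt_le_sqrt key
    rwa [Real.sqrt_sq_eq_abs, Real.sqrt_sq (by positivity)] at h
  have hX4 : X ^ ((1:ℝ)/4) = xx ^ 2 := by
    rw [hxx', ← Real.rpow_natCast (X ^ ((1:ℝ)/8)) 2, ← Real.rpow_mul hX]
    norm_num
  rw [hX4]
  exact habs
end
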